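/- arXiv:2006.10344 — 3 statements merged into one kernel-verified Lean document; each statement's English description precedes it below -/
import Mathlib

section
/- Let p be a prime with p ≡ 1 (mod 4). Then the fundamental unit ε_p of the real quadratic field ℚ(√p) has norm N_{ℚ(√p)/ℚ}(ε_p) = -1. -/
open NumberField

theorem negPell (p : ℕ) (hp : p.Prime) (hp4 : p % 4 = 1) :
    ∃ x y : ℤ, x ^ 2 - (p : ℤ) * y ^ 2 = -1 := by
  have hp2 : (2:ℕ) ≤ p := hp.two_le
  have hpd : 0 < (p : ℤ) := by positivity
  have hpZ : Prime ((p:ℤ)) := Nat.prime_iff_prime_int.mp hp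
  have hns : ¬IsSquare ((p:ℤ)) := by
    rintro ⟨r, hr⟩
    have h1 : (p:ℤ) ∣ r := hpZ.dvd_of_dvd_pow (n := 2) (by rw [sq, ← hr])
    obtain ⟨s, hs⟩ := h1
    have h2 : (1:ℤ) = (p:ℤ) * s ^ 2 := by
      have := hr
      rw [hs] at this
      have h3 : (p:ℤ) * 1 = (p:ℤ) * ((p:ℤ) * s ^ 2) := by ring_nf; linear_combination this
      exact mul_left_cancel₀ (by positivity) h3
    have h4 : (p:ℤ) ∣ 1 := ⟨s ^ 2, h2⟩
    have := Int.le_of_dvd one_pos h4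
    omega
  obtain ⟨a, ha⟩ := Pell.IsFundamental.exists_of_not_isSquare hpd hns
  have hprop := a.prop
  have hx1 : 1 < a.x := ha.1
  have hy0 : 0 < a.y := ha.2.1
  obtain ⟨q, hq⟩ : ∃ q:ℕ, p = 4*q+1 := ⟨p/4, by omega⟩
  have hpq : (p:ℤ) = 4*(q:ℤ)+1 := by rw [hq]; push_cast; ring
  have hyeven : (2:ℤ) ∣ a.y := by
    rcases Int.even_or_odd a.y with h | h
    · exact h.two_dvd
    · exfalso
      obtain ⟨k, hk⟩ := h
      rcases Int.even_or_odd a.x with ⟨m, hm⟩ | ⟨m, hm⟩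
      · rw [hm, hk, hpq] at hprop
        have e : (4:ℤ) * (m^2 - 4*(q:ℤ)*k^2 - 4*q*k - q - k^2 - k) = 2 := by
          linear_combination hprop
        exact absurd ⟨_, e.symm⟩ (by norm_num : ¬(4:ℤ) ∣ 2)
      · rw [hm, hk, hpq] at hprop
        have e : (4:ℤ) * (m^2 + m - 4*(q:ℤ)*k^2 - 4*q*k - q - k^2 - k) = 1 := by
          linear_combination hprop
        exact absurd ⟨_, e.symm⟩ (by norm_num : ¬(4:ℤ) ∣ 1)
  have hxodd : Odd a.x := by
    rcases Int.even_or_odd a.x with ⟨m, hm⟩ | h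
    · exfalso
      obtain ⟨k, hk⟩ := hyeven
      rw [hm, hk] at hprop
      have e : (4:ℤ) * (m^2 - (p:ℤ)*k^2) = 1 := by linear_combination hprop
      exact absurd ⟨_, e.symm⟩ (by norm_num : ¬(4:ℤ) ∣ 1)
    · exact h
  obtain ⟨m, hm⟩ := hxodd
  obtain ⟨z, hz⟩ := hyeven
  have hm1 : 1 ≤ m := by omega
  have hz1 : 1 ≤ z := by
    rw [hz] at hy0; omega
  have key : m * (m + 1) = (p:ℤ) * z ^ 2 := by
    have h4 : (4:ℤ) * (m * (m + 1)) = 4 * ((p:ℤ) * z ^ 2) := by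
      rw [hm, hz] at hprop; linear_combination hprop
    exact mul_left_cancel₀ (by norm_num) h4
  have hcop : IsCoprime m (m+1) := ⟨-1, 1, by ring⟩
  rcases hpZ.dvd_or_dvd ⟨z^2, key⟩ with hd | hd
  · -- p ∣ m : contradiction with fundamentality
    exfalso
    obtain ⟨c, hc⟩ := hd
    have key2 : (m+1) * c = z ^ 2 := by
      have h5 : (p:ℤ) * ((m+1) * c) = (p:ℤ) * z^2 := by rw [← key, hc]; ring
      exact mul_left_cancel₀ (by positivity) h5
    have hcop2 : IsCoprime (m+1) c :=
      (hcop.symm).of_isCoprime_of_dvd_right ⟨(p:ℤ), by rw [hc]; ring⟩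
    obtain ⟨u, hu⟩ := Int.sq_of_isCoprime hcop2 key2
    obtain ⟨v, hv⟩ := Int.sq_of_isCoprime hcop2.symm (by rw [mul_comm] at key2; exact key2)
    have hu' : m + 1 = u^2 := by
      rcases hu with h | h
      · exact h
      · exfalso; linarith [sq_nonneg u]
    have hc0 : 0 < c := by
      rcases le_or_gt c 0 with h | h
      · exfalso
        have h7 := mul_nonpos_of_nonneg_of_nonpos hpd.le h
        linarith [hc, h7]
      · exact h
    have hv' : c = v^2 := by
      rcases hv with h | h
      · exact h
      · exfalso; linarith [sq_nonneg v]
    have hsol : |u| ^ 2 - (p:ℤ) * |v| ^ 2 = 1 := by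
      rw [sq_abs, sq_abs]; linear_combination -hu' + ((p:ℤ))*hv' + hc
    have habs : (1:ℤ) < |u| := by nlinarith [sq_abs u, abs_nonneg u]
    have hle : a.x ≤ |u| := by
      have h6 : a.x ≤ (Pell.Solution₁.mk |u| |v| hsol).x :=
        ha.x_le_x (by rw [Pell.Solution₁.x_mk]; exact habs)
      rwa [Pell.Solution₁.x_mk] at h6
    have hsq : a.x ^ 2 ≤ |u| ^ 2 := pow_le_pow_left₀ (by omega) hle 2
    rw [sq_abs] at hsq
    rw [hm] at hsq
    nlinarith [hsq, hu', hm1]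
  · -- p ∣ m+1 : produce solution of the negative equation
    obtain ⟨c, hc⟩ := hd
    have key2 : m * c = z ^ 2 := by
      have h5 : (p:ℤ) * (m * c) = (p:ℤ) * z^2 := by rw [← key, hc]; ring
      exact mul_left_cancel₀ (by positivity) h5
    have hcop2 : IsCoprime m c :=
      hcop.of_isCoprime_of_dvd_right ⟨(p:ℤ), by rw [hc]; ring⟩
    obtain ⟨u, hu⟩ := Int.sq_of_isCoprime hcop2 key2
    obtain ⟨v, hv⟩ := Int.sq_of_isCoprime hcop2.symm (by rw [mul_comm] at key2; exact key2)
    have hu' : m = u^2 := by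
      rcases hu with h | h
      · exact h
      · exfalso; linarith [sq_nonneg u]
    have hc0 : 0 < c := by
      rcases le_or_gt c 0 with h | h
      · exfalso
        have h7 := mul_nonpos_of_nonneg_of_nonpos hpd.le h
        linarith [hc, h7]
      · exact h
    have hv' : c = v^2 := by
      rcases hv with h | h
      · exact h
      · exfalso; linarith [sq_nonneg v]
    exact ⟨u, v, by linear_combination -hu' + ((p:ℤ))*hv' + hc⟩

theorem normform (p : ℕ) (hp : p.Prime)
    (K : Type) [Field K] [NumberField K] (α : K) (hα : α ^ 2 = (p : K))
    (hdeg : Module.finrank ℚ K = 2) (x y : ℤ) :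
    Algebra.norm ℚ ((x : K) + (y : K) * α) = ((x ^ 2 - (p:ℤ) * y ^ 2 : ℤ) : ℚ) := by
  -- α is not rational
  have hirr : ∀ q : ℚ, algebraMap ℚ K q ≠ α := by
    intro q hq
    have h1 : algebraMap ℚ K (q ^ 2) = algebraMap ℚ K ((p : ℚ)) := by
      rw [map_pow, hq, hα]; simp
    have h2 : q ^ 2 = (p : ℚ) := (algebraMap ℚ K).injective h1
    have h3 : Real.sqrt p = |(q : ℝ)| := by
      rw [show ((p:ℝ)) = ((q:ℝ)) ^ 2 by exact_mod_cast congrArg (Rat.cast : ℚ → ℝ) h2.symm,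
        Real.sqrt_sq_eq_abs]
    have h4 := hp.irrational_sqrt
    rw [h3] at h4
    exact h4 ⟨|q|, by push_cast; rfl⟩
  have hα0 : α ≠ 0 := by
    intro h
    rw [h] at hα
    have : ((p:ℚ)) = 0 := (algebraMap ℚ K).injective (by simpa using hα.symm)
    exact_mod_cast hp.ne_zero (by exact_mod_cast this)
  have li : LinearIndependent ℚ ![(1 : K), α] := by
    rw [linearIndependent_fin2]
    refine ⟨by simpa using hα0, fun a h => ?_⟩
    have h'' : a • α = (1 : K) := by simpa using h
    have h' : algebraMap ℚ K a * α = 1 := by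
      rw [← Algebra.smul_def]; exact h''
    apply hirr a⁻¹
    rw [map_inv₀]
    exact inv_eq_of_mul_eq_one_right h'
  let b : Module.Basis (Fin 2) ℚ K := basisOfLinearIndependentOfCardEqFinrank li (by simp [hdeg])
  have hb : ⇑b = ![(1 : K), α] := coe_basisOfLinearIndependentOfCardEqFinrank li _
  have hb0 : b 0 = 1 := by rw [hb]; rfl
  have hb1 : b 1 = α := by rw [hb]; rfl
  set β := (x : K) + (y : K) * α with hβ
  have e0 : β * b 0 = ((x:ℤ):ℚ) • b 0 + ((y:ℤ):ℚ) • b 1 := by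
    rw [hb0, hb1]
    simp only [Algebra.smul_def, map_intCast]
    ring
  have e1 : β * b 1 = (((p:ℤ) * y : ℤ):ℚ) • b 0 + ((x:ℤ):ℚ) • b 1 := by
    rw [hb0, hb1]
    simp only [Algebra.smul_def, map_intCast]
    push_cast
    linear_combination ((y:K)) * hα
  rw [Algebra.norm_eq_matrix_det b, Matrix.det_fin_two]
  simp only [Algebra.leftMulMatrix_eq_repr_mul, e0, e1, map_add, map_smul, Module.Basis.repr_self,
    Finsupp.smul_single, smul_eq_mul, mul_one, Finsupp.add_apply, Finsupp.single_apply]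
  norm_num
  ring



/-- If `p ≡ 1 (mod 4)` is prime, then the fundamental unit `ε` of `K = ℚ(√p)`
has norm `N_{K/ℚ}(ε) = -1`. -/
theorem stmt_1 (p : ℕ) (hp : p.Prime) (hp4 : p % 4 = 1)
    (K : Type) [Field K] [NumberField K] (α : K) (hα : α ^ 2 = (p : K))
    (hdeg : Module.finrank ℚ K = 2)
    (ε : (𝓞 K)ˣ)
    (hfund : ∀ u : (𝓞 K)ˣ, ∃ n : ℤ, u = ε ^ n ∨ u = -ε ^ n) :
    Algebra.norm ℚ (algebraMap (𝓞 K) K (ε : 𝓞 K)) = -1 := by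
  -- norm of ε is ±1
  have habs : |Algebra.norm ℚ (algebraMap (𝓞 K) K (ε : 𝓞 K))| = 1 :=
    NumberField.Units.norm K ε
  rcases abs_eq (by norm_num : (0:ℚ) ≤ 1) |>.mp habs with ht | ht
  swap
  · exact ht
  exfalso
  -- get a solution to the negative Pell equation
  obtain ⟨x, y, hxy⟩ := negPell p hp hp4
  -- construct the corresponding unit
  have hαint : IsIntegral ℤ α := by
    refine ⟨Polynomial.X ^ 2 - Polynomial.C ((p:ℤ)), Polynomial.monic_X_pow_sub_C _ two_ne_zero, ?_⟩
    simp [hα]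
  have hintcast : ∀ a : ℤ, IsIntegral ℤ ((a : K)) := fun a => by
    have h := isIntegral_algebraMap (R := ℤ) (A := K) (x := a)
    rwa [algebraMap_int_eq, eq_intCast] at h
  have hint : ∀ a c : ℤ, IsIntegral ℤ ((a : K) + (c : K) * α) := fun a c =>
    (hintcast a).add ((hintcast c).mul hαint)
  set B : 𝓞 K := ⟨(x : K) + (y : K) * α, hint x y⟩ with hB
  set B' : 𝓞 K := ⟨(x : K) + ((-y : ℤ) : K) * α, hint x (-y)⟩ with hB'
  have hmul : B * (-B') = 1 := by
    apply NumberField.RingOfIntegers.coe_injective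
    rw [map_mul, map_neg, map_one]
    show ((x : K) + (y : K) * α) * (-((x : K) + ((-y : ℤ) : K) * α)) = 1
    have hxyK : ((x:K)) ^ 2 - (p : K) * (y:K) ^ 2 = -1 := by
      exact_mod_cast congrArg (fun t : ℤ => (t : K)) hxy
    push_cast
    linear_combination ((y:K)^2) * hα - hxyK
  have hBunit : IsUnit B := IsUnit.of_mul_eq_one (-B') hmul
  obtain ⟨u, hu⟩ := hBunit
  -- the norm of B is -1
  have hnormB : Algebra.norm ℚ (algebraMap (𝓞 K) K B) = -1 := by
    have h := normform p hp K α hα hdeg x y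
    have : algebraMap (𝓞 K) K B = (x : K) + (y : K) * α := rfl
    rw [this, h, hxy]
    norm_num
  -- the norm, as a group hom on units
  let ν : (𝓞 K)ˣ →* (𝓞 ℚ)ˣ := Units.map (RingOfIntegers.norm ℚ)
  have hcoe : ∀ w : (𝓞 K)ˣ, ((((ν w : (𝓞 ℚ)ˣ) : 𝓞 ℚ)) : ℚ)
      = Algebra.norm ℚ (algebraMap (𝓞 K) K (w : 𝓞 K)) := fun w => rfl
  have hν1 : ∀ w : (𝓞 K)ˣ,
      Algebra.norm ℚ (algebraMap (𝓞 K) K (w : 𝓞 K)) = 1 → ν w = 1 := by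
    intro w hw
    ext
    rw [hcoe w, hw]
    simp
  have hνε : ν ε = 1 := hν1 ε ht
  have hνneg : ν (-1) = 1 := by
    apply hν1
    have h1 : algebraMap (𝓞 K) K ((-1 : (𝓞 K)ˣ) : 𝓞 K) = algebraMap ℚ K (-1) := by
      simp
    rw [h1, Algebra.norm_algebraMap, hdeg]
    norm_num
  -- conclude
  obtain ⟨n, hn | hn⟩ := hfund u
  · have : ν u = 1 := by rw [hn, map_zpow, hνε, one_zpow]
    have hc := hcoe u
    rw [this, hu] at hc
    rw [hnormB] at hc
    norm_num at hc
  · have : ν u = 1 := by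
      rw [hn]
      have : (-ε ^ n : (𝓞 K)ˣ) = (-1) * ε ^ n := (neg_one_mul _).symm
      rw [this, map_mul, map_zpow, hνε, one_zpow, hνneg, one_mul]
    have hc := hcoe u
    rw [this, hu] at hc
    rw [hnormB] at hc
    norm_num at hc
end

section
/- Let p be an odd prime, q a prime which is a primitive root modulo p, n = (p-1)/2, and ζ ∈ F_{q^{p-1}} a primitive p-th root of unity. Then the multiplicative order of ζ + 1 equals p times the multiplicative order of ζ + ζ⁻¹. -/
/-- If `p` is an odd prime, `q` a prime which is a primitive root mod `p`, and
`ζ ∈ F_{q^{p-1}}` a primitive `p`-th root of unity, then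
`ord(ζ + 1) = p * ord(ζ + ζ⁻¹)`. -/
theorem stmt_6 (p q : ℕ) (hp : p.Prime) (hodd : Odd p) (hq : q.Prime)
    (hqp : orderOf (q : ZMod p) = p - 1)
    (F : Type) [Field F] [Fintype F] (hF : Fintype.card F = q ^ (p - 1))
    (ζ : F) (hζ : IsPrimitiveRoot ζ p) :
    orderOf (ζ + 1) = p * orderOf (ζ + ζ⁻¹) := by
  haveI : Fact p.Prime := ⟨hp⟩
  have hp2 : p ≠ 2 := fun h => by rw [h] at hodd; exact (by decide : ¬ Odd 2) hodd
  have hp3 : 3 ≤ p := by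
    have := hp.two_le; omega
  have hq2 : 2 ≤ q := hq.two_le
  -- characteristic of F is q
  have hchar : CharP F q := by
    have hr : (ringChar F).Prime := CharP.char_is_prime F (ringChar F)
    obtain ⟨m, -, hcard⟩ := FiniteField.card F (ringChar F)
    have hdvd : ringChar F ∣ q ^ (p - 1) := by
      rw [← hF, hcard]; exact dvd_pow_self _ (by positivity)
    have : ringChar F = q :=
      ((Nat.prime_dvd_prime_iff_eq hr hq).mp (hr.dvd_of_dvd_pow hdvd))
    rw [← this]; exact ringChar.charP F
  haveI := hchar
  haveI : Fact q.Prime := ⟨hq⟩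
  haveI : ExpChar F q := ExpChar.prime hq
  have hordζ : orderOf ζ = p := (hζ.eq_orderOf).symm
  have hζ0 : ζ ≠ 0 := hζ.ne_zero hp.pos.ne'
  -- n := (p-1)/2
  set n : ℕ := (p - 1) / 2 with hn
  have h2n : 2 * n = p - 1 := by
    obtain ⟨t, ht⟩ := hodd; omega
  have hnpos : 0 < n := by omega
  have hnlt : n < p - 1 := by omega
  -- q mod p is a unit
  have hqz0 : (q : ZMod p) ≠ 0 := by
    intro h
    rw [h] at hqp
    have h1 : (0 : ZMod p) ^ (p - 1) = 1 := hqp ▸ pow_orderOf_eq_one (0 : ZMod p)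
    rw [zero_pow (by omega)] at h1
    exact zero_ne_one h1
  have hqpow : (q : ZMod p) ^ (p - 1) = 1 := hqp ▸ pow_orderOf_eq_one _
  -- q^n = -1 in ZMod p
  have hqn : (q : ZMod p) ^ n = -1 := by
    have hsq : ((q : ZMod p) ^ n) * ((q : ZMod p) ^ n) = 1 := by
      rw [← pow_add]
      have : n + n = p - 1 := by omega
      rw [this, hqpow]
    rcases mul_self_eq_one_iff.mp hsq with h1 | h1
    · exfalso
      have := orderOf_dvd_of_pow_eq_one h1
      rw [hqp] at this
      exact absurd (Nat.le_of_dvd hnpos this) (by omega)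
    · exact h1
  have hpdvd : p ∣ q ^ n + 1 := by
    have : ((q ^ n + 1 : ℕ) : ZMod p) = 0 := by push_cast [hqn]; ring
    exact (ZMod.natCast_eq_zero_iff _ _).mp this
  -- ζ^(q^n) = ζ⁻¹
  have hζqn : ζ ^ (q ^ n) = ζ⁻¹ := by
    have h1 : ζ ^ (q ^ n) * ζ = 1 := by
      rw [← pow_succ, ← hordζ] at *
      exact orderOf_dvd_iff_pow_eq_one.mp (hordζ ▸ hpdvd)
    exact eq_inv_of_mul_eq_one_left (by rw [mul_comm] at h1 ⊢; exact h1)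
  set a : F := ζ + 1 with ha
  set c : F := ζ + ζ⁻¹ with hc
  have ha0 : a ≠ 0 := by
    intro h
    have hζm1 : ζ = -1 := by linear_combination h
    have : ζ ^ 2 = 1 := by rw [hζm1]; ring
    have := orderOf_dvd_of_pow_eq_one this
    rw [hordζ] at this
    exact absurd (Nat.le_of_dvd (by norm_num) this) (by omega)
  have hc0 : c ≠ 0 := by
    intro h
    have hζ2 : ζ ^ 2 = -1 := by
      have : ζ * c = ζ ^ 2 + 1 := by
        rw [hc, mul_add, mul_inv_cancel₀ hζ0]
        ring
      rw [h, mul_zero] at this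
      linear_combination -this
    have : ζ ^ 4 = 1 := by rw [show (4:ℕ) = 2*2 from rfl, pow_mul, hζ2]; ring
    have hdvd4 := orderOf_dvd_of_pow_eq_one this
    rw [hordζ] at hdvd4
    have := hp.dvd_of_dvd_pow (show p ∣ 2^2 by norm_num at hdvd4 ⊢; exact hdvd4)
    exact absurd (Nat.le_of_dvd (by norm_num) this) (by omega)
  -- Frobenius computations
  have hfroba : a ^ (q ^ n) = ζ⁻¹ * a := by
    rw [ha, add_pow_char_pow, one_pow, hζqn]
    field_simp
    ring
  have hfrobc : c ^ (q ^ n) = c := by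
    rw [hc, add_pow_char_pow, hζqn, inv_pow, hζqn, inv_inv, add_comm]
  have hqn1 : 1 ≤ q ^ n := Nat.one_le_pow _ _ (by omega)
  have hkeya : a ^ (q ^ n - 1) = ζ⁻¹ := by
    have : a ^ (q ^ n - 1) * a = ζ⁻¹ * a := by
      rw [← pow_succ, Nat.sub_add_cancel hqn1, hfroba]
    exact mul_right_cancel₀ ha0 this
  have hkeyc : c ^ (q ^ n - 1) = 1 := by
    have : c ^ (q ^ n - 1) * c = 1 * c := by
      rw [← pow_succ, Nat.sub_add_cancel hqn1, hfrobc, one_mul]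
    exact mul_right_cancel₀ hc0 this
  have hedvd : orderOf c ∣ q ^ n - 1 := orderOf_dvd_of_pow_eq_one hkeyc
  -- p does not divide q^n - 1
  have hpnd : ¬ p ∣ q ^ n - 1 := by
    intro h
    have h0 : ((q ^ n - 1 : ℕ) : ZMod p) = 0 := (ZMod.natCast_eq_zero_iff _ _).mpr h
    rw [Nat.cast_sub hqn1] at h0
    push_cast at h0
    rw [hqn] at h0
    have : (2 : ZMod p) = 0 := by linear_combination -h0
    have := (ZMod.natCast_eq_zero_iff 2 p).mp (by exact_mod_cast this)
    exact absurd (Nat.le_of_dvd (by norm_num) this) (by omega)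
  have hcop : Nat.Coprime p (orderOf c) :=
    (Nat.Prime.coprime_iff_not_dvd hp).mpr (fun h => hpnd (h.trans hedvd))
  -- find k with q^k ≡ 2 mod p
  obtain ⟨k, hk⟩ : ∃ k : ℕ, ζ ^ (q ^ k) = ζ ^ 2 := by
    set u : (ZMod p)ˣ := Units.mk0 _ hqz0 with hu
    have hordu : orderOf u = p - 1 := by rw [← orderOf_units]; exact hqp
    have htop : Subgroup.zpowers u = ⊤ := by
      apply Subgroup.eq_top_of_card_eq
      rw [Nat.card_zpowers, hordu, Nat.card_eq_fintype_card, ZMod.card_units]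
    have h20 : (2 : ZMod p) ≠ 0 := by
      intro h
      have := (ZMod.natCast_eq_zero_iff 2 p).mp (by exact_mod_cast h)
      exact absurd (Nat.le_of_dvd (by norm_num) this) (by omega)
    set v : (ZMod p)ˣ := Units.mk0 _ h20 with hv
    have hvmem : v ∈ Subgroup.zpowers u := htop ▸ Subgroup.mem_top v
    obtain ⟨k, hk⟩ := (Submonoid.mem_powers_iff _ _).mp
      (mem_powers_iff_mem_zpowers.mpr hvmem)
    refine ⟨k, ?_⟩
    have hz : ((q : ZMod p)) ^ k = 2 := by
      have := congrArg (Units.val) hk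
      simpa [hu, hv] using this
    have hmod : q ^ k ≡ 2 [MOD p] := by
      rw [← ZMod.natCast_eq_natCast_iff]
      push_cast
      exact hz
    calc ζ ^ q ^ k = ζ ^ (q ^ k % orderOf ζ) := (pow_mod_orderOf ζ _).symm
      _ = ζ ^ (2 % orderOf ζ) := by rw [hordζ, hmod]
      _ = ζ ^ 2 := by rw [hordζ, Nat.mod_eq_of_lt (by omega)]
  have hfrobk : a ^ (q ^ k) = ζ * c := by
    rw [ha, add_pow_char_pow, one_pow, hk, hc]
    field_simp
  -- a is a power of ζ * c
  have hback : ∃ m : ℕ, (ζ * c) ^ (q ^ m) = a := by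
    refine ⟨(p - 1) * (k + 1) - k, ?_⟩
    rw [← hfrobk, ← pow_mul, ← pow_add]
    have hkm : k + ((p - 1) * (k + 1) - k) = (p - 1) * (k + 1) := by
      have : k ≤ (p - 1) * (k + 1) := by nlinarith
      omega
    rw [hkm, pow_mul, ← hF]
    exact FiniteField.pow_card_pow _ _
  obtain ⟨m, hm⟩ := hback
  -- equality of orders
  have hdvd1 : orderOf (ζ * c) ∣ orderOf a := by
    rw [← hfrobk]
    exact orderOf_pow_dvd _
  have hdvd2 : orderOf a ∣ orderOf (ζ * c) := by
    rw [← hm]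
    exact orderOf_pow_dvd _
  have heq : orderOf a = orderOf (ζ * c) := Nat.dvd_antisymm hdvd2 hdvd1
  rw [heq, (Commute.all ζ c).orderOf_mul_eq_mul_orderOf_of_coprime
      (by rw [hordζ]; exact hcop), hordζ]
end

section
/- Let p ≡ 1 (mod 8) be prime and ζ_p ∈ ℂ a primitive p-th root of unity. Then ∏_{k=1}^{(p-1)/2} (ζ_p^{k²} + 1) = 1. -/
/-- If `p ≡ 1 (mod 8)` is prime and `ζ_p = exp(2πi/p)`, then
`∏_{k=1}^{(p-1)/2} (ζ_p^{k²} + 1) = 1`. -/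
theorem stmt_11 (p : ℕ) (hp : p.Prime) (hp8 : p % 8 = 1)
    (ζ : ℂ) (hζ : ζ = Complex.exp (2 * Real.pi * Complex.I / p)) :
    ∏ k ∈ Finset.Icc 1 ((p - 1) / 2), (ζ ^ (k ^ 2) + 1) = 1 := by
  haveI : Fact p.Prime := ⟨hp⟩
  haveI : NeZero p := ⟨hp.ne_zero⟩
  have hp1 : 1 < p := hp.one_lt
  have hp9 : 9 ≤ p := by omega
  set m := (p - 1) / 2 with hm
  have h2m : 2 * m = p - 1 := by omega
  have hζp : IsPrimitiveRoot ζ p := hζ ▸ Complex.isPrimitiveRoot_exp p hp.ne_zero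
  -- ζ-powers only depend on the exponent mod p
  have hgpow : ∀ n : ℕ, ζ ^ n = ζ ^ ((n : ZMod p).val) := by
    intro n
    rw [ZMod.val_natCast]
    conv_lhs => rw [← Nat.div_add_mod n p]
    rw [pow_add, pow_mul, hζp.pow_eq_one, one_pow, one_mul]
  have hne1 : ∀ a : ZMod p, a ≠ 0 → ζ ^ a.val ≠ 1 := by
    intro a ha h
    have hdvd : p ∣ a.val := (hζp.pow_eq_one_iff_dvd a.val).mp h
    have hv : a.val < p := ZMod.val_lt a
    have hv0 : a.val ≠ 0 := fun h0 => ha (by rwa [ZMod.val_eq_zero] at h0)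
    have := Nat.le_of_dvd (Nat.pos_of_ne_zero hv0) hdvd
    omega
  -- the set of nonzero squares
  set Q : Finset (ZMod p) := Finset.univ.filter (fun a => a ≠ 0 ∧ IsSquare a) with hQ
  have hQmem : ∀ a : ZMod p, a ∈ Q ↔ a ≠ 0 ∧ IsSquare a := by
    intro a; simp [hQ]
  -- the image of k ↦ k² on [1, m] is exactly Q
  have hcastne : ∀ k : ℕ, 1 ≤ k → k ≤ m → (k : ZMod p) ≠ 0 := by
    intro k hk1 hk2 h
    have : p ∣ k := (ZMod.natCast_eq_zero_iff k p).mp h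
    have := Nat.le_of_dvd (by omega) this
    omega
  have himg : (Finset.Icc 1 m).image (fun k : ℕ => ((k : ZMod p)) ^ 2) = Q := by
    ext a
    rw [Finset.mem_image, hQmem]
    constructor
    · rintro ⟨k, hk, rfl⟩
      rw [Finset.mem_Icc] at hk
      exact ⟨pow_ne_zero 2 (hcastne k hk.1 hk.2), ⟨(k : ZMod p), sq _⟩⟩
    · rintro ⟨ha0, b, rfl⟩
      have hb0 : b ≠ 0 := by rintro rfl; simp at ha0
      have hbv0 : b.val ≠ 0 := fun h0 => hb0 (by rwa [ZMod.val_eq_zero] at h0)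
      have hbv : b.val < p := ZMod.val_lt b
      by_cases hle : b.val ≤ m
      · refine ⟨b.val, Finset.mem_Icc.mpr ⟨by omega, hle⟩, ?_⟩
        rw [ZMod.natCast_zmod_val, sq]
      · refine ⟨p - b.val, Finset.mem_Icc.mpr ⟨by omega, by omega⟩, ?_⟩
        have : ((p - b.val : ℕ) : ZMod p) = -b := by
          rw [Nat.cast_sub hbv.le, ZMod.natCast_self, ZMod.natCast_zmod_val, zero_sub]
        rw [this]; ring
  have hinj : ∀ k₁ ∈ Finset.Icc 1 m, ∀ k₂ ∈ Finset.Icc 1 m,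
      ((k₁ : ZMod p)) ^ 2 = ((k₂ : ZMod p)) ^ 2 → k₁ = k₂ := by
    intro k₁ hk₁ k₂ hk₂ h
    rw [Finset.mem_Icc] at hk₁ hk₂
    have hmul : ((k₁ : ZMod p) - k₂) * ((k₁ : ZMod p) + k₂) = 0 := by
      linear_combination h
    rcases mul_eq_zero.mp hmul with h' | h'
    · have heq : (k₁ : ZMod p) = (k₂ : ZMod p) := sub_eq_zero.mp h'
      have := congrArg ZMod.val heq
      rw [ZMod.val_natCast_of_lt (by omega), ZMod.val_natCast_of_lt (by omega)] at this
      exact this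
    · have : ((k₁ + k₂ : ℕ) : ZMod p) = 0 := by push_cast; exact h'
      have hdvd : p ∣ k₁ + k₂ := (ZMod.natCast_eq_zero_iff _ p).mp this
      have := Nat.le_of_dvd (by omega) hdvd
      omega
  -- rewrite the product over Q
  have hP : ∏ k ∈ Finset.Icc 1 m, (ζ ^ (k ^ 2) + 1) = ∏ a ∈ Q, (ζ ^ a.val + 1) := by
    rw [← himg, Finset.prod_image hinj]
    refine Finset.prod_congr rfl fun k _ => ?_
    congr 1
    rw [hgpow (k ^ 2)]
    congr 2
    push_cast
    ring
  rw [hP]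
  -- 2 is a nonzero square mod p
  have h2sq : IsSquare (2 : ZMod p) :=
    (ZMod.exists_sq_eq_two_iff (p := p) (by omega)).mpr (Or.inl hp8)
  have h2ne : (2 : ZMod p) ≠ 0 := by
    intro h
    have : ((2 : ℕ) : ZMod p) = 0 := by push_cast; exact h
    have hdvd : p ∣ 2 := (ZMod.natCast_eq_zero_iff 2 p).mp this
    have := Nat.le_of_dvd (by omega) hdvd
    omega
  -- multiplication by 2 permutes Q
  have hinj2 : ∀ a ∈ Q, ∀ b ∈ Q, 2 * a = 2 * b → a = b := by
    intro a _ b _ h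
    exact mul_left_cancel₀ h2ne h
  have himg2 : Q.image (fun a => 2 * a) = Q := by
    apply Finset.eq_of_subset_of_card_le
    · intro x hx
      rw [Finset.mem_image] at hx
      obtain ⟨a, ha, rfl⟩ := hx
      rw [hQmem] at ha ⊢
      exact ⟨mul_ne_zero h2ne ha.1, h2sq.mul ha.2⟩
    · rw [Finset.card_image_of_injOn (fun a _ b _ h => mul_left_cancel₀ h2ne h)]
  -- the denominator product is nonzero
  set D : ℂ := ∏ a ∈ Q, (ζ ^ a.val - 1) with hDdef
  have hD : D ≠ 0 := by
    rw [hDdef, Finset.prod_ne_zero_iff]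
    intro a ha
    rw [hQmem] at ha
    exact sub_ne_zero.mpr (hne1 a ha.1)
  have key : D * ∏ a ∈ Q, (ζ ^ a.val + 1) = D := by
    rw [hDdef, ← Finset.prod_mul_distrib]
    have step : ∀ a ∈ Q, (ζ ^ a.val - 1) * (ζ ^ a.val + 1) = ζ ^ ((2 * a).val) - 1 := by
      intro a _
      have h2v : ζ ^ ((2 * a).val) = ζ ^ (2 * a.val) := by
        rw [hgpow (2 * a.val)]
        congr 2
        push_cast
        rw [ZMod.natCast_zmod_val]
      rw [h2v, two_mul, pow_add]
      ring
    rw [Finset.prod_congr rfl step]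
    conv_rhs => rw [← himg2, Finset.prod_image hinj2]
  calc ∏ a ∈ Q, (ζ ^ a.val + 1)
      = D⁻¹ * (D * ∏ a ∈ Q, (ζ ^ a.val + 1)) := by
        rw [← mul_assoc, inv_mul_cancel₀ hD, one_mul]
    _ = 1 := by rw [key, inv_mul_cancel₀ hD]
end
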